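/- arXiv:1308.2694 — 4 statements merged into one kernel-verified Lean document; each statement's English description precedes it below -/
import Mathlib

section
/- For any subset F of facilities, the sum over all clients y of charge(y, F) equals FacLoc(F), the facility-location cost of F. -/
open scoped Classical

/-- `Dmin D F y` is the distance from client `y` to the nearest facility of `F`. -/
noncomputable def Dmin {nf nc : ℕ} (D : Fin nf → Fin nc → ℝ)
    (F : Finset (Fin nf)) (y : Fin nc) : ℝ :=
  if h : F.Nonempty then F.inf' h (fun x => D x y) else 0

/-- `charge y F = D(F,y) + Σ_{x ∈ F} max {0, r_x − D(x,y)}`. -/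
noncomputable def charge {nf nc : ℕ} (D : Fin nf → Fin nc → ℝ) (r : Fin nf → ℝ)
    (y : Fin nc) (F : Finset (Fin nf)) : ℝ :=
  Dmin D F y + ∑ x ∈ F, max 0 (r x - D x y)

/-- `FacLoc F = Σ_{x ∈ F} f_x + Σ_y D(F,y)`. -/
noncomputable def FacLoc {nf nc : ℕ} (f : Fin nf → ℝ) (D : Fin nf → Fin nc → ℝ)
    (F : Finset (Fin nf)) : ℝ :=
  ∑ x ∈ F, f x + ∑ y : Fin nc, Dmin D F y

/-- For any (nonempty) subset `F` of facilities,
`Σ_y charge(y, F) = FacLoc(F)`, provided the opening costs satisfy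
`f x = Σ_{y : D(x,y) ≤ r x} (r x − D(x,y))`. -/
theorem stmt2 (nf nc : ℕ) (D : Fin nf → Fin nc → ℝ) (hD : ∀ x y, 0 ≤ D x y)
    (r : Fin nf → ℝ) (f : Fin nf → ℝ)
    (hf : ∀ x, ∑ y ∈ Finset.univ.filter (fun y => D x y ≤ r x), (r x - D x y) = f x)
    (F : Finset (Fin nf)) (hF : F.Nonempty) :
    ∑ y : Fin nc, charge D r y F = FacLoc f D F := by
  unfold charge FacLoc
  rw [Finset.sum_add_distrib, add_comm]
  congr 1
  rw [Finset.sum_comm]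
  refine Finset.sum_congr rfl fun x _ => ?_
  rw [← hf x, Finset.sum_filter]
  refine Finset.sum_congr rfl fun y _ => ?_
  rcases le_or_gt (D x y) (r x) with h | h
  · simp [h, max_eq_right, sub_nonneg.mpr h]
  · simp [not_le.mpr h, max_eq_left, sub_nonpos.mpr h.le]
end

section
/- If y is a client and x_i ∈ F_MP with D(x_i, y) > r_i, then charge(y, F_MP) ≤ D(x_i, y). -/
open scoped Classical

/-- Facility-facility distance: `D(x,x') = min_y (D(x,y) + D(x',y))`. -/
noncomputable def Dff {nf nc : ℕ} (D : Fin nf → Fin nc → ℝ)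
    (x x' : Fin nf) : ℝ :=
  ⨅ y : Fin nc, (D x y + D x' y)

/-- If the facilities of `F_MP` are pairwise separated by more than twice the max of
their radii, and `D(x_i, y) > r_i` for some `x_i ∈ F_MP`, then `charge(y, F_MP) ≤ D(x_i, y)`. -/
theorem stmt5 (nf nc : ℕ) (hnc : 0 < nc)
    (D : Fin nf → Fin nc → ℝ) (hD : ∀ x y, 0 ≤ D x y)
    (r : Fin nf → ℝ) (hr : ∀ x, 0 ≤ r x)
    (FMP : Finset (Fin nf))
    (hsep : ∀ x ∈ FMP, ∀ x' ∈ FMP, x ≠ x' → Dff D x x' > 2 * max (r x) (r x'))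
    (y : Fin nc) (xi : Fin nf) (hxi : xi ∈ FMP) (hfar : D xi y > r xi) :
    charge D r y FMP ≤ D xi y := by
  have hne : FMP.Nonempty := ⟨xi, hxi⟩
  have hDmin_le : ∀ x ∈ FMP, Dmin D FMP y ≤ D x y := by
    intro x hx
    simp only [Dmin, dif_pos hne]
    exact Finset.inf'_le _ hx
  have hDff_le : ∀ x x', Dff D x x' ≤ D x y + D x' y := by
    intro x x'
    haveI : Nonempty (Fin nc) := ⟨⟨0, hnc⟩⟩
    exact ciInf_le (Set.Finite.bddBelow (Set.finite_range _)) y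
  by_cases hex : ∃ x0 ∈ FMP, D x0 y < r x0
  · obtain ⟨x0, hx0, hx0lt⟩ := hex
    have hx0ne : x0 ≠ xi := by rintro rfl; linarith
    -- all other terms in the sum are zero
    have hsum : ∑ x ∈ FMP, max 0 (r x - D x y) = max 0 (r x0 - D x0 y) := by
      apply Finset.sum_eq_single_of_mem x0 hx0
      intro x hx hxne
      have : ¬ D x y < r x := by
        intro hlt
        have h1 := hsep x hx x0 hx0 hxne
        have h2 := hDff_le x x0
        have h3 : r x ≤ max (r x) (r x0) := le_max_left _ _
        have h4 : r x0 ≤ max (r x) (r x0) := le_max_right _ _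
        linarith
      have : r x - D x y ≤ 0 := by linarith [not_lt.mp this]
      simp [max_eq_left this]
    have h1 := hsep x0 hx0 xi hxi (by exact hx0ne)
    have h2 := hDff_le x0 xi
    have h3 : r x0 ≤ max (r x0) (r xi) := le_max_left _ _
    have hmax : max 0 (r x0 - D x0 y) = r x0 - D x0 y := max_eq_right (by linarith)
    have hd := hDmin_le x0 hx0
    unfold charge
    rw [hsum, hmax]
    linarith
  · push_neg at hex
    have hsum : ∑ x ∈ FMP, max 0 (r x - D x y) = 0 := by
      apply Finset.sum_eq_zero
      intro x hx
      exact max_eq_left (by linarith [hex x hx])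
    unfold charge
    rw [hsum]
    linarith [hDmin_le xi hxi]
end

section
/- For any nonempty subset F of facilities, FacLoc(F) ≥ (1/6)·Σ_{y∈C} r̄_y, where r̄_y = min over facilities x of (r_x + D(x,y)). -/
open scoped Classical

/-- `r̄_y = min_x (r_x + D(x,y))`. -/
noncomputable def rbar {nf nc : ℕ} (D : Fin nf → Fin nc → ℝ) (r : Fin nf → ℝ)
    (y : Fin nc) : ℝ :=
  ⨅ x : Fin nf, (r x + D x y)

/-- For any nonempty subset `F` of facilities,
`FacLoc(F) ≥ (1/6) · Σ_y r̄_y`. -/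
theorem stmt8 (nf nc : ℕ) (hnf : 0 < nf)
    (D : Fin nf → Fin nc → ℝ) (hD : ∀ x y, 0 ≤ D x y)
    (r : Fin nf → ℝ) (hr : ∀ x, 0 ≤ r x)
    (f : Fin nf → ℝ)
    (hf : ∀ x, ∑ y ∈ Finset.univ.filter (fun y => D x y ≤ r x), (r x - D x y) = f x)
    (F : Finset (Fin nf)) (hF : F.Nonempty) :
    FacLoc f D F ≥ (1 / 6) * ∑ y : Fin nc, rbar D r y := by
  classical
  have hne : Nonempty (Fin nf) := Fin.pos_iff_nonempty.mp hnf
  have hx : ∀ y : Fin nc, ∃ x ∈ F, Dmin D F y = D x y := by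
    intro y
    simpa [Dmin, hF] using Finset.exists_mem_eq_inf' hF (fun x => D x y)
  choose xy hxyF hxy using hx
  set g : Fin nc → ℝ :=
    fun y => if D (xy y) y ≤ r (xy y) then r (xy y) - D (xy y) y else 0 with hg
  -- Step A: ∑ g ≤ ∑_{x∈F} f x
  have hsum1 : ∑ y : Fin nc, g y ≤ ∑ x ∈ F, f x := by
    have hrw : ∑ x ∈ F, f x
        = ∑ y : Fin nc, ∑ x ∈ F, (if D x y ≤ r x then r x - D x y else 0) := by
      rw [Finset.sum_comm]
      refine Finset.sum_congr rfl fun x _ => ?_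
      rw [← hf x, Finset.sum_filter]
    rw [hrw]
    refine Finset.sum_le_sum fun y _ => ?_
    have hgy : g y = (fun x => if D x y ≤ r x then r x - D x y else 0) (xy y) := rfl
    rw [hgy]
    refine Finset.single_le_sum (f := fun x => if D x y ≤ r x then r x - D x y else 0)
      (fun x _ => ?_) (hxyF y)
    show 0 ≤ (if D x y ≤ r x then r x - D x y else 0)
    split
    · linarith
    · exact le_rfl
  -- Step B: per-client bound
  have hy : ∀ y : Fin nc, (1 / 6 : ℝ) * rbar D r y ≤ g y + Dmin D F y := by
    intro y
    have h1 : rbar D r y ≤ r (xy y) + D (xy y) y :=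
      ciInf_le (Finite.bddBelow_range _) (xy y)
    have h2 : Dmin D F y = D (xy y) y := hxy y
    rw [h2]
    simp only [hg]
    split
    · rename_i h
      have := hr (xy y)
      linarith
    · rename_i h
      push_neg at h
      have := hD (xy y) y
      linarith
  calc (1 / 6 : ℝ) * ∑ y : Fin nc, rbar D r y
      = ∑ y : Fin nc, (1 / 6 : ℝ) * rbar D r y := Finset.mul_sum _ _ _
    _ ≤ ∑ y : Fin nc, (g y + Dmin D F y) := Finset.sum_le_sum fun y _ => hy y
    _ = ∑ y : Fin nc, g y + ∑ y : Fin nc, Dmin D F y := Finset.sum_add_distrib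
    _ ≤ ∑ x ∈ F, f x + ∑ y : Fin nc, Dmin D F y := by linarith
    _ = FacLoc f D F := rfl
end

section
/- With t_i' := 4·t_i/n_f for the dissemination recurrence, if n_f > 48 and n_c > 48 then for every i ≥ 5, t_i' ≤ min{4·n_f, n_c/4}. -/
open scoped Classical

/-- The dissemination recurrence: `t 1 = n_f · min{n_f, n_c}`, `t i = t (i-1) / 2`
for `2 ≤ i ≤ 5`, and for `i > 5` the value depends on whether `t (i-1) > n_c`. -/
noncomputable def tseq (nf nc : ℝ) : ℕ → ℝ
  | 0 => nf * min nf nc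
  | (i + 1) =>
    if i = 0 then nf * min nf nc
    else if i + 1 ≤ 5 then tseq nf nc i / 2
    else if tseq nf nc i > nc then 2 * nf + (tseq nf nc i + nc) ^ 2 / (nf * nc)
    else 2 * nf + tseq nf nc i / nf

lemma tseq_key (f c : ℝ) (hf : (49:ℝ) ≤ f) (hc : (49:ℝ) ≤ c) :
    ∀ i : ℕ, 5 ≤ i → tseq f c i ≤ min (f ^ 2) (f * c / 16) := by
  have hf0 : (0:ℝ) < f := by linarith
  have hc0 : (0:ℝ) < c := by linarith
  intro i hi
  induction i, hi using Nat.le_induction with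
  | base =>
      have h5 : tseq f c 5 = f * min f c / 16 := by
        norm_num [tseq]; ring
      rw [h5, le_min_iff]
      constructor
      · have : min f c ≤ f := min_le_left _ _
        nlinarith
      · have : min f c ≤ c := min_le_right _ _
        nlinarith
  | succ i hi ih =>
      have ht1 : tseq f c i ≤ f ^ 2 := (le_min_iff.mp ih).1
      have ht2 : tseq f c i ≤ f * c / 16 := (le_min_iff.mp ih).2
      have hne : i ≠ 0 := by omega
      have hle : ¬ (i + 1 ≤ 5) := by omega
      rw [show tseq f c (i+1) =
          (if i = 0 then f * min f c
          else if i + 1 ≤ 5 then tseq f c i / 2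
          else if tseq f c i > c then 2 * f + (tseq f c i + c) ^ 2 / (f * c)
          else 2 * f + tseq f c i / f) from rfl]
      rw [if_neg hne, if_neg hle]
      set t := tseq f c i with ht
      by_cases hcase : t > c
      · rw [if_pos hcase, le_min_iff]
        have hfc : (0:ℝ) < f * c := by positivity
        have hsq : (t + c) ^ 2 ≤ 4 * t ^ 2 := by nlinarith
        have htt : t ^ 2 ≤ f ^ 2 * (f * c / 16) := by nlinarith
        have h1 : (t + c) ^ 2 / (f * c) ≤ f ^ 2 / 4 := by
          rw [div_le_div_iff₀ hfc (by norm_num)]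
          nlinarith
        have h2 : (t + c) ^ 2 / (f * c) ≤ f * c / 64 := by
          rw [div_le_div_iff₀ hfc (by norm_num)]
          nlinarith
        constructor
        · nlinarith
        · nlinarith
      · rw [if_neg hcase, le_min_iff]
        have h1 : t / f ≤ f := by
          rw [div_le_iff₀ hf0]; nlinarith
        have h2 : t / f ≤ c / 16 := by
          rw [div_le_div_iff₀ hf0 (by norm_num)]; nlinarith
        constructor
        · nlinarith
        · nlinarith

/-- With `t_i' = 4 t_i / n_f`: if `n_f > 48` and `n_c > 48`, then for every `i ≥ 5`,
`t_i' ≤ min {4 n_f, n_c / 4}`. -/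
theorem stmt13 (nf nc : ℕ) (hnf : 48 < nf) (hnc : 48 < nc) :
    ∀ i : ℕ, 5 ≤ i →
      4 * tseq (nf : ℝ) (nc : ℝ) i / nf ≤ min (4 * (nf : ℝ)) ((nc : ℝ) / 4) := by
  have hf : (49:ℝ) ≤ (nf:ℝ) := by exact_mod_cast hnf
  have hc : (49:ℝ) ≤ (nc:ℝ) := by exact_mod_cast hnc
  have hf0 : (0:ℝ) < (nf:ℝ) := by linarith
  intro i hi
  have key := tseq_key (nf:ℝ) (nc:ℝ) hf hc i hi
  rw [le_min_iff] at key ⊢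
  constructor
  · rw [div_le_iff₀ hf0]; nlinarith [key.1]
  · rw [div_le_div_iff₀ hf0 (by norm_num : (0:ℝ) < 4)]
    nlinarith [key.2]
end
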